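/- Let A_1, A_2, A_3, B_1, B_2, B_3, C_1, C_2, C_3 be Hermitian operators on a Hilbert space with A_i² = B_j² = C_k² = I and with all operators from different families pairwise commuting ([A_i,B_j] = [A_i,C_k] = [B_j,C_k] = 0). Then the Yao Bell operator B = A_1B_2C_3 + A_2B_3C_1 + A_3B_1C_2 − A_1B_3C_2 − A_2B_1C_3 − A_3B_2C_1 satisfies B ≤ 3√3 · I. -/

import Mathlib

set_option maxHeartbeats 2000000 in
/-- Yao's tripartite Bell inequality: for Hermitian involutions `Aᵢ, Bⱼ, Cₖ` (i,j,k = 1,2,3)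
with operators from different families commuting, the Yao Bell operator
`A₁B₂C₃ + A₂B₃C₁ + A₃B₁C₂ − A₁B₃C₂ − A₂B₁C₃ − A₃B₂C₁` is at most `3√3 · I`. -/
theorem yao_operator_bound {H : Type*} [NormedAddCommGroup H]
    [InnerProductSpace ℂ H] [CompleteSpace H]
    (A B C : Fin 3 → H →L[ℂ] H)
    (hA : ∀ i, IsSelfAdjoint (A i)) (hB : ∀ j, IsSelfAdjoint (B j))
    (hC : ∀ k, IsSelfAdjoint (C k))
    (hA2 : ∀ i, A i * A i = 1) (hB2 : ∀ j, B j * B j = 1) (hC2 : ∀ k, C k * C k = 1)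
    (hAB : ∀ i j, A i * B j = B j * A i)
    (hAC : ∀ i k, A i * C k = C k * A i)
    (hBC : ∀ j k, B j * C k = C k * B j) :
    (((3 * Real.sqrt 3 : ℝ) : ℂ) • (1 : H →L[ℂ] H)
      - (A 0 * B 1 * C 2 + A 1 * B 2 * C 0 + A 2 * B 0 * C 1
         - A 0 * B 2 * C 1 - A 1 * B 0 * C 2 - A 2 * B 1 * C 0)).IsPositive := by
  have ht : ((Real.sqrt 3 : ℝ) : ℂ) * ((Real.sqrt 3 : ℝ) : ℂ) = 3 := by
    rw [← Complex.ofReal_mul, Real.mul_self_sqrt (by norm_num : (0:ℝ) ≤ 3)]; norm_num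
  -- commutation helpers oriented for normalization (A left, then B, then C)
  have hBA : ∀ i j, B j * A i = A i * B j := fun i j => (hAB i j).symm
  have hCA : ∀ i k, C k * A i = A i * C k := fun i k => (hAC i k).symm
  have hCB : ∀ j k, C k * B j = B j * C k := fun j k => (hBC j k).symm
  have hBAx : ∀ i j (x : H →L[ℂ] H), B j * (A i * x) = A i * (B j * x) := fun i j x => by
    rw [← mul_assoc, hBA, mul_assoc]
  have hCAx : ∀ i k (x : H →L[ℂ] H), C k * (A i * x) = A i * (C k * x) := fun i k x => by
    rw [← mul_assoc, hCA, mul_assoc]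
  have hCBx : ∀ j k (x : H →L[ℂ] H), C k * (B j * x) = B j * (C k * x) := fun j k x => by
    rw [← mul_assoc, hCB, mul_assoc]
  have hAAx : ∀ i (x : H →L[ℂ] H), A i * (A i * x) = x := fun i x => by
    rw [← mul_assoc, hA2, one_mul]
  have hBBx : ∀ j (x : H →L[ℂ] H), B j * (B j * x) = x := fun j x => by
    rw [← mul_assoc, hB2, one_mul]
  have hCCx : ∀ k (x : H →L[ℂ] H), C k * (C k * x) = x := fun k x => by
    rw [← mul_assoc, hC2, one_mul]
  have sA : ∀ i, star (A i) = A i := fun i => (hA i).star_eq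
  have sB : ∀ j, star (B j) = B j := fun j => (hB j).star_eq
  have sC : ∀ k, star (C k) = C k := fun k => (hC k).star_eq
  -- the sum-of-squares certificate
  have key : (((3 * Real.sqrt 3 : ℝ) : ℂ) • (1 : H →L[ℂ] H)
      - (A 0 * B 1 * C 2 + A 1 * B 2 * C 0 + A 2 * B 0 * C 1
         - A 0 * B 2 * C 1 - A 1 * B 0 * C 2 - A 2 * B 1 * C 0))
      = ((Real.sqrt 3 / 18 : ℝ) : ℂ) • ((((Real.sqrt 3 : ℝ) : ℂ) • A 0 - B 1 * C 2 + B 2 * C 1) * (((Real.sqrt 3 : ℝ) : ℂ) • A 0 - B 1 * C 2 + B 2 * C 1) + (((Real.sqrt 3 : ℝ) : ℂ) • A 1 - B 2 * C 0 + B 0 * C 2) * (((Real.sqrt 3 : ℝ) : ℂ) • A 1 - B 2 * C 0 + B 0 * C 2) + (((Real.sqrt 3 : ℝ) : ℂ) • A 2 - B 0 * C 1 + B 1 * C 0) * (((Real.sqrt 3 : ℝ) : ℂ) • A 2 - B 0 * C 1 + B 1 * C 0) + (((Real.sqrt 3 : ℝ) : ℂ) • B 0 - A 2 * C 1 + A 1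 * C 2) * (((Real.sqrt 3 : ℝ) : ℂ) • B 0 - A 2 * C 1 + A 1 * C 2) + (((Real.sqrt 3 : ℝ) : ℂ) • B 1 - A 0 * C 2 + A 2 * C 0) * (((Real.sqrt 3 : ℝ) : ℂ) • B 1 - A 0 * C 2 + A 2 * C 0) + (((Real.sqrt 3 : ℝ) : ℂ) • B 2 - A 1 * C 0 + A 0 * C 1) * (((Real.sqrt 3 : ℝ) : ℂ) • B 2 - A 1 * C 0 + A 0 * C 1) + (((Real.sqrt 3 : ℝ) : ℂ) • C 0 - A 1 * B 2 + A 2 * B 1) * (((Real.sqrt 3 : ℝ) : ℂ) • C 0 - A 1 * B 2 + A 2 * B 1) + (((Real.sqrt 3 : ℝ) : ℂ) • C 1 - A 2 * B 0 + A 0 * B 2) * (((Real.sqrt 3 : ℝ) : ℂ) • C 1 - A 2 * B 0 + A 0 * B 2) + (((Real.sqrt 3 : ℝ) : ℂ) • C 2 - A 0 * B 1 + A 1 * B 0) * (((Real.sqrt 3 : ℝ) : ℂ) • C 2 - A 0 * B 1 + A 1 * B 0))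
      + ((Real.sqrt 3 / 36 : ℝ) : ℂ) • ((A 0 * B 0 * C 1 + A 0 * B 1 * C 0 + A 1 * B 0 * C 0) * (A 0 * B 0 * C 1 + A 0 * B 1 * C 0 + A 1 * B 0 * C 0) + (A 0 * B 0 * C 2 + A 0 * B 2 * C 0 + A 2 * B 0 * C 0) * (A 0 * B 0 * C 2 + A 0 * B 2 * C 0 + A 2 * B 0 * C 0) + (A 1 * B 1 * C 0 + A 1 * B 0 * C 1 + A 0 * B 1 * C 1) * (A 1 * B 1 * C 0 + A 1 * B 0 * C 1 + A 0 * B 1 * C 1) + (A 1 * B 1 * C 2 + A 1 * B 2 * C 1 + A 2 * B 1 * C 1) * (A 1 * B 1 * C 2 + A 1 * B 2 * C 1 + A 2 * B 1 * C 1) + (A 2 * B 2 * C 0 + A 2 * B 0 * C 2 + A 0 * B 2 * C 2) * (A 2 * B 2 * C 0 + A 2 * B 0 * C 2 + A 0 * B 2 * C 2) + (A 2 * B 2 * C 1 + A 2 * B 1 * C 2 + A 1 * B 2 * C 2) * (A 2 * B 2 * C 1 + A 2 * B 1 * C 2 + A 1 * B 2 * C 2)) := by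
    simp only [smul_sub, smul_add, sub_mul, add_mul, mul_sub, mul_add,
      smul_mul_assoc, mul_smul_comm, smul_smul, mul_one, one_mul, mul_assoc,
      hBAx, hBA, hCAx, hCA, hCBx, hCB, hAAx, hA2, hBBx, hB2, hCCx, hC2]
    match_scalars <;> push_cast <;>
      first
        | ring1
        | linear_combination (((Real.sqrt 3 : ℝ) : ℂ) / 2) * ht
        | linear_combination (-(((Real.sqrt 3 : ℝ) : ℂ)) / 2) * ht
        | linear_combination (1 / 3 : ℂ) * ht
        | linear_combination (-1 / 3 : ℂ) * ht
        | linear_combination (((Real.sqrt 3 : ℝ) : ℂ)) * ht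
        | linear_combination (-(((Real.sqrt 3 : ℝ) : ℂ))) * ht
  have P2 : ∀ q : H →L[ℂ] H, IsSelfAdjoint q → (q * q).IsPositive := by
    intro q hq
    refine ⟨ContinuousLinearMap.isSelfAdjoint_iff_isSymmetric.mp (by rw [isSelfAdjoint_iff, star_mul, hq.star_eq]), fun x => ?_⟩
    simp only [ContinuousLinearMap.reApplyInnerSelf, ContinuousLinearMap.mul_apply]
    rw [show (inner ℂ (q (q x)) x : ℂ) = inner ℂ (q x) (q x) from hq.isSymmetric (q x) x]
    exact inner_self_nonneg
  have Psmul : ∀ (c : ℝ), 0 ≤ c → ∀ T : H →L[ℂ] H, T.IsPositive → (((c : ℝ) : ℂ) • T).IsPositive := by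
    intro c hc T hT
    refine ⟨?_, fun x => ?_⟩
    · rw [← ContinuousLinearMap.isSelfAdjoint_iff_isSymmetric, isSelfAdjoint_iff, star_smul, hT.isSelfAdjoint.star_eq, RCLike.star_def, Complex.conj_ofReal]
    · have h2 := hT.2 x
      simp only [ContinuousLinearMap.reApplyInnerSelf, ContinuousLinearMap.smul_apply,
        inner_smul_left, Complex.conj_ofReal] at h2 ⊢
      rw [RCLike.re_to_complex, Complex.re_ofReal_mul]
      exact mul_nonneg hc (by simpa using h2)
  have sa0 : IsSelfAdjoint ((((Real.sqrt 3 : ℝ) : ℂ) • A 0 - B 1 * C 2 + B 2 * C 1) : H →L[ℂ] H) := by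
    rw [isSelfAdjoint_iff]
    simp only [star_add, star_sub, star_smul, star_mul, star_one, RCLike.star_def,
      Complex.conj_ofReal, sA, sB, sC, mul_assoc, hBAx, hBA, hCAx, hCA, hCBx, hCB]
  have sa1 : IsSelfAdjoint ((((Real.sqrt 3 : ℝ) : ℂ) • A 1 - B 2 * C 0 + B 0 * C 2) : H →L[ℂ] H) := by
    rw [isSelfAdjoint_iff]
    simp only [star_add, star_sub, star_smul, star_mul, star_one, RCLike.star_def,
      Complex.conj_ofReal, sA, sB, sC, mul_assoc, hBAx, hBA, hCAx, hCA, hCBx, hCB]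
  have sa2 : IsSelfAdjoint ((((Real.sqrt 3 : ℝ) : ℂ) • A 2 - B 0 * C 1 + B 1 * C 0) : H →L[ℂ] H) := by
    rw [isSelfAdjoint_iff]
    simp only [star_add, star_sub, star_smul, star_mul, star_one, RCLike.star_def,
      Complex.conj_ofReal, sA, sB, sC, mul_assoc, hBAx, hBA, hCAx, hCA, hCBx, hCB]
  have sa3 : IsSelfAdjoint ((((Real.sqrt 3 : ℝ) : ℂ) • B 0 - A 2 * C 1 + A 1 * C 2) : H →L[ℂ] H) := by
    rw [isSelfAdjoint_iff]
    simp only [star_add, star_sub, star_smul, star_mul, star_one, RCLike.star_def,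
      Complex.conj_ofReal, sA, sB, sC, mul_assoc, hBAx, hBA, hCAx, hCA, hCBx, hCB]
  have sa4 : IsSelfAdjoint ((((Real.sqrt 3 : ℝ) : ℂ) • B 1 - A 0 * C 2 + A 2 * C 0) : H →L[ℂ] H) := by
    rw [isSelfAdjoint_iff]
    simp only [star_add, star_sub, star_smul, star_mul, star_one, RCLike.star_def,
      Complex.conj_ofReal, sA, sB, sC, mul_assoc, hBAx, hBA, hCAx, hCA, hCBx, hCB]
  have sa5 : IsSelfAdjoint ((((Real.sqrt 3 : ℝ) : ℂ) • B 2 - A 1 * C 0 + A 0 * C 1) : H →L[ℂ] H) := by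
    rw [isSelfAdjoint_iff]
    simp only [star_add, star_sub, star_smul, star_mul, star_one, RCLike.star_def,
      Complex.conj_ofReal, sA, sB, sC, mul_assoc, hBAx, hBA, hCAx, hCA, hCBx, hCB]
  have sa6 : IsSelfAdjoint ((((Real.sqrt 3 : ℝ) : ℂ) • C 0 - A 1 * B 2 + A 2 * B 1) : H →L[ℂ] H) := by
    rw [isSelfAdjoint_iff]
    simp only [star_add, star_sub, star_smul, star_mul, star_one, RCLike.star_def,
      Complex.conj_ofReal, sA, sB, sC, mul_assoc, hBAx, hBA, hCAx, hCA, hCBx, hCB]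
  have sa7 : IsSelfAdjoint ((((Real.sqrt 3 : ℝ) : ℂ) • C 1 - A 2 * B 0 + A 0 * B 2) : H →L[ℂ] H) := by
    rw [isSelfAdjoint_iff]
    simp only [star_add, star_sub, star_smul, star_mul, star_one, RCLike.star_def,
      Complex.conj_ofReal, sA, sB, sC, mul_assoc, hBAx, hBA, hCAx, hCA, hCBx, hCB]
  have sa8 : IsSelfAdjoint ((((Real.sqrt 3 : ℝ) : ℂ) • C 2 - A 0 * B 1 + A 1 * B 0) : H →L[ℂ] H) := by
    rw [isSelfAdjoint_iff]
    simp only [star_add, star_sub, star_smul, star_mul, star_one, RCLike.star_def,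
      Complex.conj_ofReal, sA, sB, sC, mul_assoc, hBAx, hBA, hCAx, hCA, hCBx, hCB]
  have sa9 : IsSelfAdjoint ((A 0 * B 0 * C 1 + A 0 * B 1 * C 0 + A 1 * B 0 * C 0) : H →L[ℂ] H) := by
    rw [isSelfAdjoint_iff]
    simp only [star_add, star_sub, star_smul, star_mul, star_one, RCLike.star_def,
      Complex.conj_ofReal, sA, sB, sC, mul_assoc, hBAx, hBA, hCAx, hCA, hCBx, hCB]
  have sa10 : IsSelfAdjoint ((A 0 * B 0 * C 2 + A 0 * B 2 * C 0 + A 2 * B 0 * C 0) : H →L[ℂ] H) := by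
    rw [isSelfAdjoint_iff]
    simp only [star_add, star_sub, star_smul, star_mul, star_one, RCLike.star_def,
      Complex.conj_ofReal, sA, sB, sC, mul_assoc, hBAx, hBA, hCAx, hCA, hCBx, hCB]
  have sa11 : IsSelfAdjoint ((A 1 * B 1 * C 0 + A 1 * B 0 * C 1 + A 0 * B 1 * C 1) : H →L[ℂ] H) := by
    rw [isSelfAdjoint_iff]
    simp only [star_add, star_sub, star_smul, star_mul, star_one, RCLike.star_def,
      Complex.conj_ofReal, sA, sB, sC, mul_assoc, hBAx, hBA, hCAx, hCA, hCBx, hCB]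
  have sa12 : IsSelfAdjoint ((A 1 * B 1 * C 2 + A 1 * B 2 * C 1 + A 2 * B 1 * C 1) : H →L[ℂ] H) := by
    rw [isSelfAdjoint_iff]
    simp only [star_add, star_sub, star_smul, star_mul, star_one, RCLike.star_def,
      Complex.conj_ofReal, sA, sB, sC, mul_assoc, hBAx, hBA, hCAx, hCA, hCBx, hCB]
  have sa13 : IsSelfAdjoint ((A 2 * B 2 * C 0 + A 2 * B 0 * C 2 + A 0 * B 2 * C 2) : H →L[ℂ] H) := by
    rw [isSelfAdjoint_iff]
    simp only [star_add, star_sub, star_smul, star_mul, star_one, RCLike.star_def,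
      Complex.conj_ofReal, sA, sB, sC, mul_assoc, hBAx, hBA, hCAx, hCA, hCBx, hCB]
  have sa14 : IsSelfAdjoint ((A 2 * B 2 * C 1 + A 2 * B 1 * C 2 + A 1 * B 2 * C 2) : H →L[ℂ] H) := by
    rw [isSelfAdjoint_iff]
    simp only [star_add, star_sub, star_smul, star_mul, star_one, RCLike.star_def,
      Complex.conj_ofReal, sA, sB, sC, mul_assoc, hBAx, hBA, hCAx, hCA, hCBx, hCB]
  rw [key]
  exact (Psmul _ (by positivity) _ (((((((((P2 _ sa0).add (P2 _ sa1)).add (P2 _ sa2)).add (P2 _ sa3)).add (P2 _ sa4)).add (P2 _ sa5)).add (P2 _ sa6)).add (P2 _ sa7)).add (P2 _ sa8))).add (Psmul _ (by positivity) _ ((((((P2 _ sa9).add (P2 _ sa10)).add (P2 _ sa11)).add (P2 _ sa12)).add (P2 _ sa13)).add (P2 _ sa14)))
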